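/- If σ_n is a uniform random permutation of S_n, then #(σ_n)/log(n) converges to 1 in probability as n → ∞; moreover P(|#(σ_n)/log(n) − 1| > α) = O(1/log n) for every fixed α > 0. -/

import Mathlib

open Finset Filter
open scoped Classical Topology

/-- The number of cycles of a permutation of `Fin n`, counting fixed points as
(singleton) cycles. -/
noncomputable def numCycles {n : ℕ} (σ : Equiv.Perm (Fin n)) : ℕ :=
  σ.cycleType.card + (Finset.univ.filter fun x => σ x = x).card

/-- The probability, under the uniform measure on `S_n`, that
`|#(σ)/log n − 1| > α`. -/
noncomputable def badProb (n : ℕ) (α : ℝ) : ℝ :=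
  ((Finset.univ.filter fun σ : Equiv.Perm (Fin n) =>
      α < |(numCycles σ : ℝ) / Real.log n - 1|).card : ℝ) / (Nat.factorial n : ℝ)

section core
open Equiv Equiv.Perm

noncomputable def ncyc {α : Type*} [Fintype α] [DecidableEq α] (f : Equiv.Perm α) : ℕ :=
  f.cycleType.card + (Fintype.card α - f.support.card)

variable {α : Type*} [Fintype α] [DecidableEq α]

lemma ncyc_swap_mul {f : Equiv.Perm α} {a b : α} (hfa : f a = a) (hab : b ≠ a) :
    ncyc (Equiv.swap a b * f) + 1 = ncyc f := by
  have hasup : a ∉ f.support := by simp [hfa]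
  by_cases hfb : f b = b
  · -- disjoint case
    have hd : Disjoint (Equiv.swap a b) f := by
      intro x
      by_cases hx : x = a ∨ x = b
      · rcases hx with rfl | rfl
        · exact Or.inr hfa
        · exact Or.inr hfb
      · push_neg at hx
        exact Or.inl (Equiv.swap_apply_of_ne_of_ne hx.1 hx.2)
    have hct : (Equiv.swap a b * f).cycleType = (Equiv.swap a b).cycleType + f.cycleType :=
      hd.cycleType_mul
    have hcts : (Equiv.swap a b).cycleType = {2} := by
      have h1 : IsCycle (Equiv.swap a b) := isCycle_swap (Ne.symm hab)
      rw [h1.cycleType, card_support_swap (Ne.symm hab)]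
    have hsup : (Equiv.swap a b * f).support.card = 2 + f.support.card := by
      rw [hd.card_support_mul, card_support_swap (Ne.symm hab)]
    have hle : (Equiv.swap a b * f).support.card ≤ Fintype.card α := card_le_univ _
    have hle2 : f.support.card ≤ Fintype.card α := card_le_univ _
    unfold ncyc
    rw [hct, hcts, Multiset.card_add, hsup]
    simp only [Multiset.card_singleton]
    omega
  · -- b is in a nontrivial cycle of f
    set c := f.cycleOf b with hcdef
    have hc : c ∈ f.cycleFactorsFinset :=
      cycleOf_mem_cycleFactorsFinset_iff.mpr (mem_support.mpr hfb)
    have hdisj : Disjoint (f * c⁻¹) c := disjoint_mul_inv_of_mem_cycleFactorsFinset hc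
    set h := f * c⁻¹ with hhdef
    have hfhc : f = c * h := by
      rw [hhdef, ← hdisj.commute.eq, inv_mul_cancel_right]
    have hcb : c b = f b := cycleOf_apply_self ..
    have hbmem : b ∈ c.support := by
      rw [mem_support, hcb]; exact hfb
    have hcsub : c.support ⊆ f.support := support_cycleOf_le f b
    have hanotc : a ∉ c.support := fun h' => hasup (hcsub h')
    have hca : c a = a := by simpa using (fun h' => hanotc (mem_support.mpr h'))
    have hcyc : IsCycle c := isCycle_cycleOf f hfb
    set c' := Equiv.swap a b * c with hc'def
    have hc'a : c' a = b := by
      rw [hc'def, Equiv.Perm.mul_apply, hca, Equiv.swap_apply_left]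
    -- powers of c' starting at a reach powers of c starting at b
    have key : ∀ k : ℕ, ∃ m : ℤ, (c' ^ m) a = (c ^ k) b := by
      intro k
      induction k with
      | zero => exact ⟨1, by simpa using hc'a⟩
      | succ k ih =>
        by_cases hw : (c ^ (k + 1)) b = b
        · exact ⟨1, by rw [hw]; simpa using hc'a⟩
        · obtain ⟨m, hm⟩ := ih
          refine ⟨m + 1, ?_⟩
          have hmem : (c ^ (k + 1)) b ∈ c.support := (pow_apply_mem_support).mpr hbmem
          have hne_a : (c ^ (k + 1)) b ≠ a := fun h' => hanotc (h' ▸ hmem)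
          have : (c' ^ (m + 1)) a = c' ((c' ^ m) a) := by
            rw [add_comm, zpow_add, zpow_one, Equiv.Perm.mul_apply]
          rw [this, hm, hc'def, Equiv.Perm.mul_apply, ← Equiv.Perm.mul_apply c,
            ← pow_succ' c]
          exact Equiv.swap_apply_of_ne_of_ne hne_a hw
    have hsupc' : c'.support = insert a c.support := by
      ext y
      simp only [Finset.mem_insert, mem_support]
      constructor
      · intro hy
        by_cases hya : y = a
        · exact Or.inl hya
        · by_cases hyc : c y = y
          · exfalso
            apply hy
            rw [hc'def, Equiv.Perm.mul_apply, hyc]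
            have hyb : y ≠ b := by
              rintro rfl; exact (mem_support.mp hbmem) hyc
            exact Equiv.swap_apply_of_ne_of_ne hya hyb
          · exact Or.inr hyc
      · intro hy
        rcases hy with rfl | hy
        · rw [hc'a]; exact hab
        · rw [hc'def, Equiv.Perm.mul_apply]
          have hmemcy : c y ∈ c.support := apply_mem_support.mpr (mem_support.mpr hy)
          have hcya : c y ≠ a := fun h' => hanotc (h' ▸ hmemcy)
          have hyne_a : y ≠ a := fun h' => hanotc (h' ▸ mem_support.mpr hy)
          by_cases hcyb : c y = b
          · rw [hcyb, Equiv.swap_apply_right]; exact (Ne.symm hyne_a)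
          · rw [Equiv.swap_apply_of_ne_of_ne hcya hcyb]; exact hy
    have hcyc' : IsCycle c' := by
      refine ⟨a, by rw [hc'a]; exact hab, ?_⟩
      intro y hy
      have hymem : y ∈ c'.support := mem_support.mpr hy
      rw [hsupc'] at hymem
      rcases Finset.mem_insert.mp hymem with rfl | hymem
      · exact SameCycle.refl _ _
      · have hsc : SameCycle c b y :=
          hcyc.sameCycle (mem_support.mp hbmem) (mem_support.mp hymem)
        obtain ⟨k, -, hk⟩ := hsc.exists_pow_eq'
        obtain ⟨m, hm⟩ := key k
        exact ⟨m, by rw [hm, hk]⟩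
    -- now compute cycle types
    have hdisj' : Disjoint c' h := by
      rw [disjoint_iff_disjoint_support, hsupc']
      have h1 : _root_.Disjoint h.support c.support :=
        (disjoint_iff_disjoint_support.mp hdisj)
      have h2 : a ∉ h.support := by
        intro ha
        have := support_mul_le f c⁻¹ ha
        simp only [Finset.sup_eq_union, Finset.mem_union, support_inv] at this
        rcases this with h' | h'
        · exact hasup h'
        · exact hanotc h'
      rw [Finset.insert_eq, Finset.disjoint_union_left]
      exact ⟨by simpa using h2, h1.symm⟩
    have hg : Equiv.swap a b * f = c' * h := by
      rw [hfhc, hc'def, mul_assoc]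
    have hctg : (Equiv.swap a b * f).cycleType = c'.cycleType + h.cycleType := by
      rw [hg]; exact hdisj'.cycleType_mul
    have hctf : f.cycleType = c.cycleType + h.cycleType := by
      rw [hfhc]; exact (hdisj.symm).cycleType_mul
    have hctc' : c'.cycleType = {c.support.card + 1} := by
      rw [hcyc'.cycleType, hsupc', Finset.card_insert_of_notMem hanotc]
    have hctc : c.cycleType = {c.support.card} := by
      rw [hcyc.cycleType]
    -- cards
    have hcard : (Equiv.swap a b * f).cycleType.card = f.cycleType.card := by
      rw [hctg, hctf, hctc', hctc]
      simp
    have hsum : (Equiv.swap a b * f).support.card = f.support.card + 1 := by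
      have e1 := sum_cycleType (Equiv.swap a b * f)
      have e2 := sum_cycleType f
      rw [hctg, hctc'] at e1
      rw [hctf, hctc] at e2
      simp only [Multiset.sum_add, Multiset.sum_singleton] at e1 e2
      omega
    have hle : (Equiv.swap a b * f).support.card ≤ Fintype.card α := card_le_univ _
    unfold ncyc
    rw [hcard, hsum]
    omega

def finSuccNe (n : ℕ) : Fin n ≃ {x : Fin (n + 1) // x ≠ 0} where
  toFun i := ⟨i.succ, Fin.succ_ne_zero i⟩
  invFun x := x.1.pred x.2
  left_inv i := by simp
  right_inv x := by ext; simp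

lemma decomposeFin_zero_eq {n : ℕ} (e : Equiv.Perm (Fin n)) :
    Equiv.Perm.decomposeFin.symm (0, e) = e.extendDomain (finSuccNe n) := by
  ext x
  refine Fin.cases ?_ ?_ x
  · rw [Equiv.Perm.decomposeFin_symm_apply_zero]
    rw [Equiv.Perm.extendDomain_apply_not_subtype]
    simp
  · intro i
    rw [Equiv.Perm.decomposeFin_symm_apply_succ]
    have : (i.succ : Fin (n + 1)) = (finSuccNe n) i := rfl
    rw [this, Equiv.Perm.extendDomain_apply_image]
    simp [finSuccNe]

lemma decomposeFin_eq_swap_mul {n : ℕ} (p : Fin (n + 1)) (e : Equiv.Perm (Fin n)) :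
    Equiv.Perm.decomposeFin.symm (p, e) =
      Equiv.swap 0 p * Equiv.Perm.decomposeFin.symm (0, e) := by
  ext x
  refine Fin.cases ?_ ?_ x
  · simp
  · intro i
    simp

lemma numCycles_eq_ncyc {n : ℕ} (σ : Equiv.Perm (Fin n)) : numCycles σ = ncyc σ := by
  unfold numCycles ncyc
  congr 1
  have h := Finset.card_filter_add_card_filter_not
    (s := (univ : Finset (Fin n))) (p := fun x => σ x = x)
  have hsupp : σ.support = univ.filter fun x => ¬ σ x = x := rfl
  have hle : σ.support.card ≤ Fintype.card (Fin n) := card_le_univ _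
  rw [hsupp] at hle ⊢
  simp only [Fintype.card_fin, Finset.card_univ] at *
  omega

lemma ncyc_decomposeFin_zero {n : ℕ} (e : Equiv.Perm (Fin n)) :
    ncyc (Equiv.Perm.decomposeFin.symm (0, e)) = ncyc e + 1 := by
  rw [decomposeFin_zero_eq]
  unfold ncyc
  have hct : ((e.extendDomain (finSuccNe n)).cycleType) = e.cycleType :=
    cycleType_extendDomain (finSuccNe n)
  have hs1 := sum_cycleType (e.extendDomain (finSuccNe n))
  have hs2 := sum_cycleType e
  rw [hct, hs2] at hs1
  have hle : e.support.card ≤ Fintype.card (Fin n) := card_le_univ _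
  rw [hct, ← hs1]
  simp only [Fintype.card_fin] at *
  omega

lemma numCycles_decomposeFin {n : ℕ} (p : Fin (n + 1)) (e : Equiv.Perm (Fin n)) :
    numCycles (Equiv.Perm.decomposeFin.symm (p, e)) =
      numCycles e + if p = 0 then 1 else 0 := by
  rw [numCycles_eq_ncyc, numCycles_eq_ncyc]
  by_cases hp : p = 0
  · rw [hp, if_pos rfl, ncyc_decomposeFin_zero]
  · rw [if_neg hp, add_zero, decomposeFin_eq_swap_mul]
    have h0 : (Equiv.Perm.decomposeFin.symm (0, e)) 0 = 0 :=
      Equiv.Perm.decomposeFin_symm_apply_zero 0 e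
    have := ncyc_swap_mul (a := (0 : Fin (n+1))) (b := p) h0 hp
    have h2 := ncyc_decomposeFin_zero e
    omega

end core

noncomputable def H (n : ℕ) : ℝ := ∑ i ∈ Finset.range n, (1 : ℝ) / (i + 1)

lemma H_succ (n : ℕ) : H (n + 1) = H n + 1 / (n + 1) := by
  unfold H
  rw [Finset.sum_range_succ]

lemma sum_one_perm (n : ℕ) : ∑ _e : Equiv.Perm (Fin n), (1 : ℝ) = (n.factorial : ℝ) := by
  rw [Finset.sum_const, Finset.card_univ, Fintype.card_perm, Fintype.card_fin, nsmul_eq_mul,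
    mul_one]

lemma sum_numCycles (n : ℕ) :
    ∑ σ : Equiv.Perm (Fin n), (numCycles σ : ℝ) = (n.factorial : ℝ) * H n := by
  induction n with
  | zero =>
    rw [Finset.sum_eq_single 1]
    · simp [numCycles, H]
    · intro b _ hb
      exact absurd (Subsingleton.elim b 1) hb
    · simp
  | succ n ih =>
    rw [Finset.univ_perm_fin_succ, Finset.sum_map]
    simp only [Equiv.coe_toEmbedding]
    rw [Fintype.sum_prod_type]
    have hkey : ∀ (p : Fin (n+1)) (e : Equiv.Perm (Fin n)),
        (numCycles (Equiv.Perm.decomposeFin.symm (p, e)) : ℝ) =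
          (numCycles e : ℝ) + if p = 0 then 1 else 0 := by
      intro p e
      rw [numCycles_decomposeFin]
      push_cast [apply_ite]
      ring_nf
      simp [apply_ite]
    simp only [hkey]
    have hin : ∀ p : Fin (n+1),
        ∑ e : Equiv.Perm (Fin n), ((numCycles e : ℝ) + if p = 0 then 1 else 0)
          = (n.factorial : ℝ) * H n + (n.factorial : ℝ) * (if p = 0 then 1 else 0) := by
      intro p
      rw [Finset.sum_add_distrib, ih, Finset.sum_const, Finset.card_univ, Fintype.card_perm,
        Fintype.card_fin, nsmul_eq_mul]
    simp only [hin]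
    rw [Finset.sum_add_distrib, Finset.sum_const, Finset.card_univ, Fintype.card_fin,
      nsmul_eq_mul, ← Finset.mul_sum]
    rw [Fin.sum_univ_succ]
    simp only [if_pos rfl, Fin.succ_ne_zero, if_false, Finset.sum_const_zero, add_zero]
    rw [H_succ, Nat.factorial_succ]
    push_cast
    have : ((n : ℝ) + 1) ≠ 0 := by positivity
    field_simp

lemma sum_sq_numCycles (n : ℕ) :
    ∑ σ : Equiv.Perm (Fin n), ((numCycles σ : ℝ) - H n) ^ 2 ≤ (n.factorial : ℝ) * H n := by
  induction n with
  | zero =>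
    rw [Finset.sum_eq_single 1]
    · simp [numCycles, H]
    · intro b _ hb
      exact absurd (Subsingleton.elim b 1) hb
    · simp
  | succ n ih =>
    have hsum0 : ∑ e : Equiv.Perm (Fin n), ((numCycles e : ℝ) - H n) = 0 := by
      rw [Finset.sum_sub_distrib, sum_numCycles, Finset.sum_const, Finset.card_univ,
        Fintype.card_perm, Fintype.card_fin, nsmul_eq_mul]
      ring
    rw [Finset.univ_perm_fin_succ, Finset.sum_map]
    simp only [Equiv.coe_toEmbedding]
    rw [Fintype.sum_prod_type]
    have hkey : ∀ (p : Fin (n+1)) (e : Equiv.Perm (Fin n)),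
        ((numCycles (Equiv.Perm.decomposeFin.symm (p, e)) : ℝ) - H (n+1)) ^ 2 =
          (((numCycles e : ℝ) - H n) + ((if p = 0 then (1:ℝ) else 0) - 1 / (n+1))) ^ 2 := by
      intro p e
      rw [numCycles_decomposeFin, H_succ]
      split_ifs <;> push_cast <;> ring
    simp only [hkey]
    have hin : ∀ u : ℝ,
        ∑ e : Equiv.Perm (Fin n), (((numCycles e : ℝ) - H n) + u) ^ 2
          = (∑ e : Equiv.Perm (Fin n), ((numCycles e : ℝ) - H n) ^ 2)
            + (n.factorial : ℝ) * u ^ 2 := by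
      intro u
      have expand : ∀ d : ℝ, (d + u) ^ 2 = d ^ 2 + (2 * u) * d + u ^ 2 := fun d => by ring
      simp only [expand]
      rw [Finset.sum_add_distrib, Finset.sum_add_distrib, ← Finset.mul_sum, hsum0,
        Finset.sum_const, Finset.card_univ, Fintype.card_perm, Fintype.card_fin, nsmul_eq_mul]
      ring
    simp only [hin]
    rw [Finset.sum_add_distrib, Finset.sum_const, Finset.card_univ, Fintype.card_fin,
      nsmul_eq_mul, ← Finset.mul_sum]
    have hq : ((n : ℝ) + 1) ≠ 0 := by positivity
    have husq : ∑ p : Fin (n+1), ((if p = 0 then (1:ℝ) else 0) - 1 / (n+1)) ^ 2 ≤ 1 := by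
      rw [Fin.sum_univ_succ]
      simp only [eq_self_iff_true, if_true, Fin.succ_ne_zero, if_false, Finset.sum_const,
        Finset.card_univ, Fintype.card_fin, nsmul_eq_mul, zero_sub, neg_sq]
      have h2 : (0:ℝ) ≤ 1 / ((n:ℝ)+1) := by positivity
      have h3 : ((n:ℝ)) * (1/((n:ℝ)+1))^2 = 1/((n:ℝ)+1) - (1/((n:ℝ)+1))^2 := by
        field_simp
        ring
      nlinarith [h2, h3]
    have hfpos : (0:ℝ) ≤ (n.factorial : ℝ) := by positivity
    have hnn : (0:ℝ) ≤ (n:ℝ) + 1 := by positivity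
    calc (((n+1:ℕ) : ℝ)) * (∑ e : Equiv.Perm (Fin n), ((numCycles e : ℝ) - H n) ^ 2)
          + (n.factorial : ℝ) * ∑ p : Fin (n+1), ((if p = 0 then (1:ℝ) else 0) - 1/(n+1)) ^ 2
        ≤ (((n+1:ℕ) : ℝ)) * ((n.factorial : ℝ) * H n) + (n.factorial : ℝ) * 1 := by
          gcongr
      _ = ((n+1).factorial : ℝ) * H (n + 1) := by
          rw [H_succ, Nat.factorial_succ]
          push_cast
          field_simp

lemma H_eq_harmonic (n : ℕ) : H n = ((harmonic n : ℚ) : ℝ) := by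
  unfold H harmonic
  push_cast
  simp [one_div]

lemma log_le_H (n : ℕ) : Real.log n ≤ H n := by
  rw [H_eq_harmonic]
  calc Real.log n ≤ Real.log (n + 1) := by
        rcases Nat.eq_zero_or_pos n with rfl | hn
        · simp [Real.log_nonneg]
        · apply Real.log_le_log (by positivity)
          push_cast; linarith
    _ ≤ _ := by exact_mod_cast log_add_one_le_harmonic n

lemma H_le_log (n : ℕ) : H n ≤ 1 + Real.log n := by
  rw [H_eq_harmonic]
  exact_mod_cast harmonic_le_one_add_log n

lemma cheby (n : ℕ) (t : ℝ) (ht : 0 < t) :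
    ((Finset.univ.filter fun σ : Equiv.Perm (Fin n) =>
        t ≤ |(numCycles σ : ℝ) - H n|).card : ℝ) * t ^ 2
      ≤ (n.factorial : ℝ) * H n := by
  set s := Finset.univ.filter fun σ : Equiv.Perm (Fin n) => t ≤ |(numCycles σ : ℝ) - H n|
  have h1 : (s.card : ℝ) * t ^ 2 ≤ ∑ σ ∈ s, ((numCycles σ : ℝ) - H n) ^ 2 := by
    have := Finset.card_nsmul_le_sum s (fun σ => ((numCycles σ : ℝ) - H n) ^ 2) (t ^ 2) ?_
    · simpa [nsmul_eq_mul] using this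
    · intro σ hσ
      have habs : t ≤ |(numCycles σ : ℝ) - H n| := (Finset.mem_filter.mp hσ).2
      calc t ^ 2 ≤ |(numCycles σ : ℝ) - H n| ^ 2 := by
            exact pow_le_pow_left₀ ht.le habs 2
        _ = ((numCycles σ : ℝ) - H n) ^ 2 := sq_abs _
  have h2 : ∑ σ ∈ s, ((numCycles σ : ℝ) - H n) ^ 2
      ≤ ∑ σ : Equiv.Perm (Fin n), ((numCycles σ : ℝ) - H n) ^ 2 :=
    Finset.sum_le_sum_of_subset_of_nonneg (Finset.filter_subset _ _)
      (fun σ _ _ => sq_nonneg _)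
  linarith [sum_sq_numCycles n, h1, h2]

theorem uniform_numCycles_div_log (α : ℝ) (hα : 0 < α) :
    Tendsto (fun n => badProb n α) atTop (𝓝 0) ∧
      ∃ C : ℝ, ∀ n : ℕ, 2 ≤ n → badProb n α ≤ C / Real.log n := by
  set C : ℝ := max (8 / α ^ 2) (max 1 (2 / α)) with hC
  have hCpos : 0 < C := lt_of_lt_of_le one_pos ((le_max_left 1 (2/α)).trans (le_max_right _ _))
  have hbound : ∀ n : ℕ, 2 ≤ n → badProb n α ≤ C / Real.log n := by
    intro n hn
    have hn1 : (1 : ℝ) < n := by exact_mod_cast hn.trans_lt' one_lt_two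
    set L := Real.log n with hLdef
    have hL : 0 < L := Real.log_pos hn1
    have hfac : (0 : ℝ) < (n.factorial : ℝ) := by positivity
    have hprob_nonneg : 0 ≤ badProb n α := by
      unfold badProb; positivity
    by_cases hcase : 2 ≤ α * L ∧ 1 ≤ L
    · obtain ⟨hc1, hc2⟩ := hcase
      set t : ℝ := α * L / 2 with htdef
      have ht : 0 < t := by positivity
      -- bad σ have t ≤ |X - H n|
      have hsub : (Finset.univ.filter fun σ : Equiv.Perm (Fin n) =>
            α < |(numCycles σ : ℝ) / Real.log n - 1|) ⊆
          (Finset.univ.filter fun σ : Equiv.Perm (Fin n) =>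
            t ≤ |(numCycles σ : ℝ) - H n|) := by
        intro σ hσ
        rw [Finset.mem_filter] at hσ ⊢
        refine ⟨Finset.mem_univ _, ?_⟩
        have h1 : α < |(numCycles σ : ℝ) / L - 1| := hσ.2
        have h2 : |(numCycles σ : ℝ) - L| = |(numCycles σ : ℝ) / L - 1| * L := by
          have he : ((numCycles σ : ℝ) - L) = ((numCycles σ : ℝ) / L - 1) * L := by
            field_simp
          rw [he, abs_mul, abs_of_pos hL]
        have h3 : α * L < |(numCycles σ : ℝ) - L| := by
          rw [h2]
          exact mul_lt_mul_of_pos_right h1 hL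
        have h4 : |(numCycles σ : ℝ) - L| ≤ |(numCycles σ : ℝ) - H n| + 1 := by
          have hHlb : L ≤ H n := log_le_H n
          have hHub : H n ≤ 1 + L := H_le_log n
          have : |(numCycles σ : ℝ) - L| ≤ |(numCycles σ : ℝ) - H n| + |H n - L| := by
            calc |(numCycles σ : ℝ) - L| = |((numCycles σ : ℝ) - H n) + (H n - L)| := by
                  ring_nf
              _ ≤ _ := abs_add_le _ _
          have : |H n - L| ≤ 1 := by
            rw [abs_le]; constructor <;> linarith
          linarith [abs_add_le ((numCycles σ : ℝ) - H n) (H n - L),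
            (by ring_nf : |(numCycles σ : ℝ) - L| = |((numCycles σ : ℝ) - H n) + (H n - L)|)]
        -- α L - 1 ≥ α L / 2 = t
        linarith
      have hcard := Finset.card_le_card hsub
      have hcheb := cheby n t ht
      have hH : H n ≤ 2 * L := by linarith [H_le_log n]
      -- badProb ≤ (n! * H n)/(n! t²) ≤ 2L/t²
      unfold badProb
      rw [div_le_div_iff₀ hfac hL]
      have hcnt : ((Finset.univ.filter fun σ : Equiv.Perm (Fin n) =>
          α < |(numCycles σ : ℝ) / Real.log n - 1|).card : ℝ) * t ^ 2
            ≤ (n.factorial : ℝ) * (2 * L) := by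
        calc ((Finset.univ.filter fun σ : Equiv.Perm (Fin n) =>
              α < |(numCycles σ : ℝ) / Real.log n - 1|).card : ℝ) * t ^ 2
            ≤ ((Finset.univ.filter fun σ : Equiv.Perm (Fin n) =>
              t ≤ |(numCycles σ : ℝ) - H n|).card : ℝ) * t ^ 2 := by
              have : ((Finset.univ.filter fun σ : Equiv.Perm (Fin n) =>
                  α < |(numCycles σ : ℝ) / Real.log n - 1|).card : ℝ)
                  ≤ ((Finset.univ.filter fun σ : Equiv.Perm (Fin n) =>
                  t ≤ |(numCycles σ : ℝ) - H n|).card : ℝ) := by exact_mod_cast hcard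
              nlinarith [sq_nonneg t]
          _ ≤ (n.factorial : ℝ) * H n := cheby n t ht
          _ ≤ (n.factorial : ℝ) * (2 * L) := by nlinarith
      -- conclude: cnt * L ≤ C/L * ... need cnt * L ≤ C * n!
      have hC8 : 8 / α ^ 2 ≤ C := le_max_left _ _
      have ht2 : t ^ 2 = α ^ 2 * L ^ 2 / 4 := by rw [htdef]; ring
      -- cnt ≤ n! * 2L / t² = n! * 8/(α² L)
      have hαsq : 0 < α ^ 2 := by positivity
      have hkey : ((Finset.univ.filter fun σ : Equiv.Perm (Fin n) =>
          α < |(numCycles σ : ℝ) / Real.log n - 1|).card : ℝ) * L ≤ C * (n.factorial : ℝ) := by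
        rw [ht2] at hcnt
        calc ((Finset.univ.filter fun σ : Equiv.Perm (Fin n) =>
            α < |(numCycles σ : ℝ) / Real.log n - 1|).card : ℝ) * L
            = ((Finset.univ.filter fun σ : Equiv.Perm (Fin n) =>
            α < |(numCycles σ : ℝ) / Real.log n - 1|).card : ℝ) * (α ^ 2 * L ^ 2 / 4)
              * (8 / (α ^ 2 * L) / 2) := by field_simp; ring
          _ ≤ (n.factorial : ℝ) * (2 * L) * (8 / (α ^ 2 * L) / 2) := by
              apply mul_le_mul_of_nonneg_right hcnt
              positivity
          _ = 8 / α ^ 2 * (n.factorial : ℝ) := by field_simp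
          _ ≤ C * (n.factorial : ℝ) := by nlinarith
      linarith [hkey]
    · -- small n case: L ≤ max 1 (2/α) ≤ C and badProb ≤ 1
      have hLle : L ≤ max 1 (2 / α) := by
        rcases not_and_or.mp hcase with h | h
        · push_neg at h
          have : L ≤ 2 / α := by
            rw [le_div_iff₀ hα]
            nlinarith
          exact this.trans (le_max_right _ _)
        · push_neg at h
          exact (le_of_lt h).trans (le_max_left _ _)
      have hLC : L ≤ C := hLle.trans (le_max_right _ _)
      have h1 : badProb n α ≤ 1 := by
        unfold badProb
        rw [div_le_one hfac]
        have := Finset.card_le_univ (Finset.univ.filter fun σ : Equiv.Perm (Fin n) =>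
          α < |(numCycles σ : ℝ) / Real.log n - 1|)
        calc ((Finset.univ.filter fun σ : Equiv.Perm (Fin n) =>
            α < |(numCycles σ : ℝ) / Real.log n - 1|).card : ℝ)
            ≤ (Finset.univ.card : ℝ) := by exact_mod_cast this
          _ = (n.factorial : ℝ) := by
              rw [Finset.card_univ, Fintype.card_perm, Fintype.card_fin]
      have h2 : (1 : ℝ) ≤ C / L := by
        rw [le_div_iff₀ hL]; linarith
      linarith
  constructor
  · refine squeeze_zero' (Filter.Eventually.of_forall fun n => ?_)
      (Filter.eventually_atTop.mpr ⟨2, hbound⟩)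
      (Filter.Tendsto.div_atTop tendsto_const_nhds
        (Real.tendsto_log_atTop.comp tendsto_natCast_atTop_atTop))
    unfold badProb; positivity
  · exact ⟨C, hbound⟩
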